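/- Fix y > y₀ and define g(θ) := δ ∫_{y-θ}^y f(x) dx + h(y)(f(y) - f(y-θ)) for θ ∈ [0, y - y₀]. Then under the standing assumptions, g(0) = 0 and g'(θ) = f(y-θ)(δ + h(y)λ(y-θ)) > 0 for θ ∈ (0, y - y₀], hence g(θ) > 0 for all θ ∈ (0, y - y₀]. Consequently -δ V^{S₂}(y,θ) - h(y) V^{S₂}_y(y,θ) < 0 in the region S₂, where V^{S₂}(y,θ) = ∫_{y-θ}^y f(x) dx. -/

import Mathlib

open Real intervalIntegral

/-- Lemma A.4: for fixed `y > y₀`, the function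
`g(θ) = δ∫_{y-θ}^y f + h(y)(f(y) - f(y-θ))` vanishes at `0`, has derivative
`f(y-θ)(δ + h(y)λ(y-θ)) > 0` on `(0, y-y₀]`, hence is positive there; consequently
`-δ V^{S₂} - h(y) V^{S₂}_y < 0` in the region `S₂`, where `V^{S₂}(y,θ) = ∫_{y-θ}^y f`. -/
theorem stmt11 (h lam : ℝ → ℝ) (δ y₀ : ℝ)
    (hC2 : ContDiff ℝ 2 h) (hh0 : h 0 = 0)
    (hh' : ∀ y, 0 < deriv h y)
    (hh'' : ∀ y, 0 ≤ deriv (deriv h) y)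
    (hlamC1 : ContDiff ℝ 1 lam) (hlampos : ∀ y, 0 < lam y)
    (hhlam' : ∀ y, 0 < deriv (fun z => h z * lam z) y)
    (hδ : 0 < δ)
    (hy₀lt : y₀ < 0)
    (hy₀ : h y₀ * lam y₀ + δ = 0)
    (f : ℝ → ℝ)
    (hf : ∀ y, f y = Real.exp (∫ x in (0:ℝ)..y, lam x))
    (y : ℝ) (hy : y₀ < y)
    (g : ℝ → ℝ)
    (hg : ∀ θ, g θ = δ * (∫ x in (y - θ)..y, f x) + h y * (f y - f (y - θ))) :
    g 0 = 0 ∧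
    (∀ θ ∈ Set.Ioc 0 (y - y₀),
      HasDerivAt g (f (y - θ) * (δ + h y * lam (y - θ))) θ ∧
      0 < f (y - θ) * (δ + h y * lam (y - θ))) ∧
    (∀ θ ∈ Set.Ioc 0 (y - y₀), 0 < g θ) ∧
    (∀ θ ∈ Set.Ioc 0 (y - y₀),
      -δ * (∫ x in (y - θ)..y, f x)
        - h y * deriv (fun u => ∫ x in (u - θ)..u, f x) y < 0) := by
  -- basic continuity / positivity facts
  have hlamc : Continuous lam := hlamC1.continuous
  have hL : ∀ u : ℝ, HasDerivAt (fun v => ∫ x in (0:ℝ)..v, lam x) (lam u) u := by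
    intro u
    exact intervalIntegral.integral_hasDerivAt_right
      (hlamc.intervalIntegrable _ _) (hlamc.stronglyMeasurableAtFilter _ _)
      hlamc.continuousAt
  have hfpos : ∀ u, 0 < f u := fun u => by rw [hf]; exact Real.exp_pos _
  have hfD : ∀ u, HasDerivAt f (lam u * f u) u := by
    intro u
    have h1 := (hL u).exp
    have hfe : f = fun v => Real.exp (∫ x in (0:ℝ)..v, lam x) := funext hf
    rw [hfe]
    convert h1 using 1
    simp only
    ring
  have hfc : Continuous f := by
    have : Differentiable ℝ f := fun u => (hfD u).differentiableAt
    exact this.continuous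
  -- antiderivative
  set F : ℝ → ℝ := fun u => ∫ x in y₀..u, f x with hFdef
  have hFD : ∀ u : ℝ, HasDerivAt F (f u) u := by
    intro u
    exact intervalIntegral.integral_hasDerivAt_right
      (hfc.intervalIntegrable _ _) (hfc.stronglyMeasurableAtFilter _ _)
      hfc.continuousAt
  have hInt : ∀ a b : ℝ, (∫ x in a..b, f x) = F b - F a := by
    intro a b
    rw [hFdef]
    simp only
    rw [intervalIntegral.integral_interval_sub_left
      (hfc.intervalIntegrable _ _) (hfc.intervalIntegrable _ _)]
  have hgeq : g = fun t => δ * (F y - F (y - t)) + h y * (f y - f (y - t)) := by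
    funext t; rw [hg, hInt]
  -- derivative of g everywhere
  have hgD : ∀ θ : ℝ, HasDerivAt g (f (y - θ) * (δ + h y * lam (y - θ))) θ := by
    intro θ
    have hyθ : HasDerivAt (fun t : ℝ => y - t) (-1) θ := by
      exact (hasDerivAt_id' θ).const_sub y
    have h1 : HasDerivAt (fun t => F (y - t)) (f (y - θ) * (-1)) θ :=
      (hFD (y - θ)).comp θ hyθ
    have h2 : HasDerivAt (fun t => f (y - t)) ((lam (y - θ) * f (y - θ)) * (-1)) θ :=
      (hfD (y - θ)).comp θ hyθ
    have h3 : HasDerivAt (fun t => δ * (F y - F (y - t)) + h y * (f y - f (y - t)))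
        (δ * (0 - f (y - θ) * (-1)) + h y * (0 - (lam (y - θ) * f (y - θ)) * (-1))) θ :=
      (((hasDerivAt_const θ (F y)).sub h1).const_mul δ).add
        (((hasDerivAt_const θ (f y)).sub h2).const_mul (h y))
    rw [hgeq]
    convert h3 using 1
    ring
  -- positivity of the derivative
  have hmonohl : StrictMono (fun z => h z * lam z) := strictMono_of_deriv_pos hhlam'
  have hmonoh : StrictMono h := strictMono_of_deriv_pos hh'
  have hpos : ∀ θ ∈ Set.Ioc 0 (y - y₀), 0 < f (y - θ) * (δ + h y * lam (y - θ)) := by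
    intro θ hθ
    have h1 : y₀ ≤ y - θ := by linarith [hθ.2]
    have h2 : y - θ < y := by linarith [hθ.1]
    have hge : -δ ≤ h (y - θ) * lam (y - θ) := by
      have := hmonohl.le_iff_le.mpr h1
      have this : h y₀ * lam y₀ ≤ h (y - θ) * lam (y - θ) := this
      linarith
    have hlt : h (y - θ) * lam (y - θ) < h y * lam (y - θ) :=
      mul_lt_mul_of_pos_right (hmonoh h2) (hlampos _)
    have : 0 < δ + h y * lam (y - θ) := by linarith
    exact mul_pos (hfpos _) this
  have hg0 : g 0 = 0 := by rw [hg]; simp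
  -- g positive on (0, y - y₀]
  have hgmono : StrictMonoOn g (Set.Icc 0 (y - y₀)) := by
    apply strictMonoOn_of_deriv_pos (convex_Icc _ _)
    · exact (Differentiable.continuous (fun t => (hgD t).differentiableAt)).continuousOn
    · intro x hx
      rw [interior_Icc] at hx
      rw [(hgD x).deriv]
      exact hpos x ⟨hx.1, hx.2.le⟩
  have hgpos : ∀ θ ∈ Set.Ioc 0 (y - y₀), 0 < g θ := by
    intro θ hθ
    have := hgmono (Set.mem_Icc.mpr ⟨le_refl 0, by linarith⟩)
      (Set.mem_Icc.mpr ⟨hθ.1.le, hθ.2⟩) hθ.1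
    rwa [hg0] at this
  refine ⟨hg0, fun θ hθ => ⟨hgD θ, hpos θ hθ⟩, hgpos, ?_⟩
  intro θ hθ
  have hVeq : (fun u => ∫ x in (u - θ)..u, f x) = fun u => F u - F (u - θ) := by
    funext u; rw [hInt]
  have hVD : HasDerivAt (fun u => ∫ x in (u - θ)..u, f x) (f y - f (y - θ)) y := by
    rw [hVeq]
    have huθ : HasDerivAt (fun u : ℝ => u - θ) 1 y := by
      exact (hasDerivAt_id' y).sub_const θ
    have : HasDerivAt (fun u => F u - F (u - θ)) (f y - f (y - θ) * 1) y :=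
      (hFD y).sub (by have h5 : HasDerivAt (F ∘ fun u : ℝ => u - θ) (f (y - θ) * 1) y := (hFD (y - θ)).comp y huθ; exact h5)
    simpa using this
  rw [hVD.deriv]
  have := hgpos θ hθ
  rw [hg] at this
  linarith
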